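/- (Asymptotic marginal coverage of WACI.) Let n ≥ 1, γ > 0, λ ∈ (0,1), α* ∈ (0,1). Let idx : ℕ → {1, …, n}, let (err_t)_{t≥1} be a sequence with err_t ∈ {0,1} for every t, and let (α_t)_{t≥1} be a sequence of vectors in ℝ^n satisfying α_{t+1}[j] = α_t[j] + γ·λ^{|idx(t) − j|}·(α* − err_t) for every t ≥ 1 and j ∈ {1, …, n}. Assume there exists ν ∈ ℕ such that α_t[j] ∈ [−ν, 1+ν] for every t ≥ 1 and j ∈ {1, …, n}. Then (1/T)·Σ_{t=1}^{T} err_t → α* as T → ∞. -/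

import Mathlib

open Filter

lemma waci_key (n : ℕ) (hn : 1 ≤ n) (lam : ℝ) (hl0 : 0 < lam) (hl1 : lam < 1)
    (i : Fin n) :
    ∑ j : Fin n, lam ^ (((i : ℤ) - (j : ℤ)).natAbs) *
      ((1 - lam)/(1 + lam) + ((if (j:ℕ) = 0 then lam/(1+lam) else 0)
        + (if (j:ℕ) = n - 1 then lam/(1+lam) else 0))) = 1 := by
  have hl1' : lam ≠ 1 := ne_of_lt hl1
  have hlne : lam - 1 ≠ 0 := by linarith
  have h1plne : (1:ℝ) + lam ≠ 0 := by linarith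
  have hi : (i:ℕ) < n := i.isLt
  set d : ℝ := lam/(1+lam) with hd
  have hsum_if : ∀ m : ℕ, m < n →
      ∑ j : Fin n, lam ^ (((i : ℤ) - (j : ℤ)).natAbs) * (if (j:ℕ) = m then d else 0)
        = lam ^ ((((i:ℕ):ℤ) - (m:ℤ)).natAbs) * d := by
    intro m hm
    rw [Finset.sum_eq_single (⟨m, hm⟩ : Fin n)]
    · simp
    · intro b _ hb
      have hbm : (b:ℕ) ≠ m := by
        intro h; exact hb (Fin.ext h)
      simp [hbm]
    · simp
  have hS : ∑ j : Fin n, lam ^ (((i : ℤ) - (j : ℤ)).natAbs)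
      = (∑ k ∈ Finset.range ((i:ℕ)+1), lam ^ k)
        + lam * ∑ k ∈ Finset.range (n-1-(i:ℕ)), lam ^ k := by
    rw [Fin.sum_univ_eq_sum_range (fun j => lam ^ ((((i:ℕ):ℤ) - (j:ℤ)).natAbs)) n]
    rw [Finset.range_eq_Ico,
      ← Finset.sum_Ico_consecutive _ (Nat.zero_le ((i:ℕ)+1)) (by omega : (i:ℕ)+1 ≤ n)]
    congr 1
    · rw [← Finset.range_eq_Ico, ← Finset.sum_range_reflect]
      apply Finset.sum_congr rfl
      intro j hj
      simp only [Finset.mem_range] at hj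
      congr 1
      omega
    · rw [Finset.sum_Ico_eq_sum_range]
      have hcard : n - ((i:ℕ)+1) = n - 1 - (i:ℕ) := by omega
      rw [hcard, Finset.mul_sum]
      apply Finset.sum_congr rfl
      intro k hk
      have he : ((((i:ℕ)):ℤ) - (((i:ℕ)+1+k : ℕ):ℤ)).natAbs = k + 1 := by omega
      rw [he, pow_succ]
      ring
  simp only [mul_add, Finset.sum_add_distrib, ← Finset.sum_mul,
    hsum_if 0 (by omega), hsum_if (n-1) (by omega), hS]
  rw [geom_sum_eq hl1', geom_sum_eq hl1']
  have e1 : ((((i:ℕ)):ℤ) - ((0:ℕ):ℤ)).natAbs = (i:ℕ) := by omega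
  have e2 : ((((i:ℕ)):ℤ) - ((n-1:ℕ):ℤ)).natAbs = n - 1 - (i:ℕ) := by omega
  rw [e1, e2]
  have hx : lam ^ ((i:ℕ)+1) = lam ^ ((i:ℕ)) * lam := pow_succ _ _
  rw [hx, hd]
  generalize lam ^ ((i:ℕ)) = X
  generalize lam ^ (n-1-(i:ℕ)) = Y
  field_simp
  ring

/-- Asymptotic marginal coverage of WACI. -/
theorem stmt_14 (n : ℕ) (hn : 1 ≤ n) (γ lam αstar : ℝ) (hγ : 0 < γ)
    (hlam : lam ∈ Set.Ioo (0 : ℝ) 1) (hαstar : αstar ∈ Set.Ioo (0 : ℝ) 1)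
    (idx : ℕ → Fin n) (err : ℕ → ℝ)
    (herr : ∀ t, 1 ≤ t → err t = 0 ∨ err t = 1)
    (α : ℕ → Fin n → ℝ)
    (hrec : ∀ t, 1 ≤ t → ∀ j : Fin n,
      α (t + 1) j = α t j + γ * lam ^ ((idx t : ℤ) - (j : ℤ)).natAbs * (αstar - err t))
    (ν : ℕ) (hbound : ∀ t, 1 ≤ t → ∀ j : Fin n, α t j ∈ Set.Icc (-(ν : ℝ)) (1 + ν)) :
    Tendsto (fun T : ℕ => (1 / (T : ℝ)) * ∑ t ∈ Finset.Icc 1 T, err t)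
      atTop (nhds αstar) := by
  obtain ⟨hl0, hl1⟩ := hlam
  have h1pl : (0:ℝ) < 1 + lam := by linarith
  set c : Fin n → ℝ := fun j =>
    (1 - lam)/(1 + lam) + ((if (j:ℕ) = 0 then lam/(1+lam) else 0)
      + (if (j:ℕ) = n - 1 then lam/(1+lam) else 0)) with hc
  have hcb : ∀ j, 0 ≤ c j ∧ c j ≤ 1 := by
    intro j
    have ha0 : 0 ≤ (1 - lam)/(1 + lam) := div_nonneg (by linarith) (by linarith)
    have hd0 : 0 ≤ lam/(1+lam) := by positivity
    have hsum1 : (1 - lam)/(1 + lam) + (lam/(1+lam) + lam/(1+lam)) = 1 := by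
      field_simp
      ring
    constructor
    · simp only [hc]; split_ifs <;> linarith
    · simp only [hc]; split_ifs <;> linarith
  set β : ℕ → ℝ := fun t => ∑ j : Fin n, c j * α t j with hβ
  have hβrec : ∀ t, 1 ≤ t → β (t+1) = β t + γ * (αstar - err t) := by
    intro t ht
    have h1 : β (t+1) = ∑ j : Fin n,
        c j * (α t j + γ * lam ^ (((idx t : ℤ) - (j:ℤ)).natAbs) * (αstar - err t)) := by
      apply Finset.sum_congr rfl
      intro j _
      rw [hrec t ht j]
    have h2 : ∑ j : Fin n,
        c j * (γ * lam ^ (((idx t : ℤ) - (j:ℤ)).natAbs) * (αstar - err t))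
        = γ * (αstar - err t) *
          ∑ j : Fin n, lam ^ (((idx t : ℤ) - (j:ℤ)).natAbs) * c j := by
      rw [Finset.mul_sum]
      apply Finset.sum_congr rfl
      intro j _
      ring
    rw [h1]
    simp only [mul_add, Finset.sum_add_distrib]
    rw [h2, waci_key n hn lam hl0 hl1 (idx t), mul_one]
  have htel : ∀ T, β (T+1) = β 1 + γ * ∑ t ∈ Finset.Icc 1 T, (αstar - err t) := by
    intro T
    induction T with
    | zero => simp
    | succ T ih =>
      rw [Finset.sum_Icc_succ_top (by omega : 1 ≤ T+1), hβrec (T+1) (by omega), ih]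
      ring
  set B : ℝ := n * (1 + ν) with hB
  have hβbd : ∀ t, 1 ≤ t → |β t| ≤ B := by
    intro t ht
    calc |β t| ≤ ∑ j : Fin n, |c j * α t j| := Finset.abs_sum_le_sum_abs _ _
      _ ≤ ∑ _j : Fin n, (1 + (ν:ℝ)) := by
          apply Finset.sum_le_sum
          intro j _
          obtain ⟨hc0, hc1⟩ := hcb j
          obtain ⟨hlo, hhi⟩ := hbound t ht j
          have hν : (0:ℝ) ≤ ν := Nat.cast_nonneg ν
          have habs : |α t j| ≤ 1 + ν := abs_le.mpr ⟨by linarith, hhi⟩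
          rw [abs_mul]
          calc |c j| * |α t j| ≤ 1 * (1 + ν) := by
                apply mul_le_mul _ habs (abs_nonneg _) zero_le_one
                rw [abs_of_nonneg hc0]; exact hc1
            _ = 1 + ν := one_mul _
      _ = B := by simp [hB]; ring
  have hsum_bd : ∀ T, |∑ t ∈ Finset.Icc 1 T, (αstar - err t)| ≤ 2 * B / γ := by
    intro T
    have h1 := htel T
    have h2 := hβbd 1 le_rfl
    have h3 := hβbd (T+1) (by omega)
    rw [le_div_iff₀ hγ]
    have heq : |∑ t ∈ Finset.Icc 1 T, (αstar - err t)| * γ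
        = |β (T+1) - β 1| := by
      rw [h1]
      simp only [add_sub_cancel_left, abs_mul, abs_of_pos hγ]
      ring
    rw [heq]
    calc |β (T+1) - β 1| ≤ |β (T+1)| + |β 1| := abs_sub _ _
      _ ≤ 2 * B := by linarith
  have hcard : ∀ T : ℕ, ∑ t ∈ Finset.Icc 1 T, (αstar - err t)
      = T * αstar - ∑ t ∈ Finset.Icc 1 T, err t := by
    intro T
    rw [Finset.sum_sub_distrib, Finset.sum_const, Nat.card_Icc]
    simp [nsmul_eq_mul]
  rw [← tendsto_sub_nhds_zero_iff]
  apply squeeze_zero_norm' (a := fun T : ℕ => (2*B/γ) / T)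
  · filter_upwards [eventually_ge_atTop 1] with T hT
    have hT0 : (0:ℝ) < T := by exact_mod_cast Nat.lt_of_lt_of_le Nat.zero_lt_one hT
    have heq : (1/(T:ℝ)) * ∑ t ∈ Finset.Icc 1 T, err t - αstar
        = -((1/(T:ℝ)) * ∑ t ∈ Finset.Icc 1 T, (αstar - err t)) := by
      rw [hcard T]
      field_simp
      ring
    rw [heq, norm_neg, norm_mul, Real.norm_eq_abs, Real.norm_eq_abs,
      abs_of_pos (by positivity : (0:ℝ) < 1/(T:ℝ))]
    calc 1/(T:ℝ) * |∑ t ∈ Finset.Icc 1 T, (αstar - err t)| ≤ 1/(T:ℝ) * (2*B/γ) :=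
        mul_le_mul_of_nonneg_left (hsum_bd T) (by positivity)
      _ = 2*B/γ / T := by ring
  · exact tendsto_const_div_atTop_nhds_zero_nat (2*B/γ)
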